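/- Let E = E(n,c) be a uniform Cantor set with ∑ n_k c_k < ∞ (so E has positive Lebesgue measure), and let P be an n-matching sequence of positive probability vectors that is ultimately 1-uniform, i.e. there exists k₀ such that p_{k,i} = 1/n_k for all k ≥ k₀ and all i. Then the measure μ_P on E extends to a doubling measure ν on [0,1], i.e. there is a doubling measure ν on [0,1] with ν restricted to E equal to μ_P. -/

import Mathlib

open Finset MeasureTheory Filter Topology
open scoped ENNReal NNReal

/-- Length of a level-`k` component of the uniform Cantor set `E(n,c)`. -/
noncomputable def cdelta (n : ℕ → ℕ) (c : ℕ → ℝ) (k : ℕ) : ℝ :=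
  ∏ i ∈ Finset.Icc 1 k, (1 - ((n i : ℝ) - 1) * c i) / (n i : ℝ)

/-- Length of a level-`k` gap of the uniform Cantor set `E(n,c)`. -/
noncomputable def ceps (n : ℕ → ℕ) (c : ℕ → ℝ) (k : ℕ) : ℝ :=
  c k * cdelta n c (k - 1)

/-- Left endpoint of the level-`k` component indexed by the word `w` (positions `1,…,k`). -/
noncomputable def leftpt (n : ℕ → ℕ) (c : ℕ → ℝ) (w : ℕ → ℕ) (k : ℕ) : ℝ :=
  ∑ j ∈ Finset.Icc 1 k, ((w j : ℝ) - 1) * (cdelta n c j + ceps n c j)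

/-- `w` is a word of length `k`: `1 ≤ w j ≤ n j` for `1 ≤ j ≤ k`. -/
def IsWord (n : ℕ → ℕ) (w : ℕ → ℕ) (k : ℕ) : Prop :=
  ∀ j, 1 ≤ j → j ≤ k → 1 ≤ w j ∧ w j ≤ n j

/-- The level-`k` component `I_w` of the uniform Cantor set. -/
noncomputable def cInt (n : ℕ → ℕ) (c : ℕ → ℝ) (w : ℕ → ℕ) (k : ℕ) : Set ℝ :=
  Set.Icc (leftpt n c w k) (leftpt n c w k + cdelta n c k)

/-- The set `E_k`, union of all level-`k` components. -/
def levelSet (n : ℕ → ℕ) (c : ℕ → ℝ) (k : ℕ) : Set ℝ :=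
  ⋃ w ∈ {w : ℕ → ℕ | IsWord n w k}, cInt n c w k

/-- The uniform Cantor set `E(n,c) = ⋂_k E_k`. -/
def uniformCantorSet (n : ℕ → ℕ) (c : ℕ → ℝ) : Set ℝ :=
  ⋂ k, levelSet n c k

/-- Standing assumptions on the data: `n_k ≥ 2`, `c_k ∈ (0,1)`, `(n_k - 1) c_k < 1`. -/
def CantorParams (n : ℕ → ℕ) (c : ℕ → ℝ) : Prop :=
  ∀ k, 1 ≤ k → 2 ≤ n k ∧ 0 < c k ∧ c k < 1 ∧ ((n k : ℝ) - 1) * c k < 1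

/-- `p` is an `n`-matching sequence of positive probability vectors. -/
def MatchingSeq (n : ℕ → ℕ) (p : ℕ → ℕ → ℝ) : Prop :=
  ∀ k, 1 ≤ k → (∀ i, 1 ≤ i → i ≤ n k → 0 < p k i) ∧ ∑ i ∈ Finset.Icc 1 (n k), p k i = 1

/-- `μ` is the Borel probability measure on `E(n,c)` determined by the matching sequence `p`:
`μ(I_{wi}) = p_{k,i} μ(I_w)`. -/
def MatchingMeasure (n : ℕ → ℕ) (c : ℕ → ℝ) (p : ℕ → ℕ → ℝ) (μ : Measure ℝ) : Prop :=
  IsProbabilityMeasure μ ∧ μ (uniformCantorSet n c)ᶜ = 0 ∧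
    ∀ k, 1 ≤ k → ∀ w : ℕ → ℕ, IsWord n w (k - 1) → ∀ i, 1 ≤ i → i ≤ n k →
      μ (cInt n c (Function.update w k i) k) =
        ENNReal.ofReal (p k i) * μ (cInt n c w (k - 1))

/-- `μ` is doubling with constant `C` on the metric space `E` (balls of `E`). -/
def DoublingOn (μ : Measure ℝ) (E : Set ℝ) (C : ℝ≥0∞) : Prop :=
  ∀ x ∈ E, ∀ r : ℝ, 0 < r →
    0 < μ (Metric.ball x (2 * r) ∩ E) ∧
      μ (Metric.ball x (2 * r) ∩ E) ≤ C * μ (Metric.ball x r ∩ E) ∧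
      μ (Metric.ball x (2 * r) ∩ E) < ⊤

/-- The vector `(p 1, …, p k)` is `C`-uniform: any two adjacent (overlapping allowed) sums of `l`
consecutive entries are comparable within the factor `C`. -/
def IsUniform (C : ℝ) (k : ℕ) (p : ℕ → ℝ) : Prop :=
  ∀ i j l : ℕ, i ≤ j → j ≤ i + l → j + l ≤ k →
    C⁻¹ * (∑ t ∈ Finset.Ioc j (j + l), p t) ≤ (∑ t ∈ Finset.Ioc i (i + l), p t) ∧
      (∑ t ∈ Finset.Ioc i (i + l), p t) ≤ C * ∑ t ∈ Finset.Ioc j (j + l), p t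



private lemma prod_one_sub_ge (s : Finset ℕ) (f : ℕ → ℝ) (h0 : ∀ j ∈ s, 0 ≤ f j)
    (h1 : ∀ j ∈ s, f j ≤ 1) : 1 - ∑ j ∈ s, f j ≤ ∏ j ∈ s, (1 - f j) := by
  classical
  induction s using Finset.induction_on with
  | empty => simp
  | @insert a s' hx ih =>
    rw [Finset.sum_insert hx, Finset.prod_insert hx]
    have h0' : ∀ j ∈ s', 0 ≤ f j := fun j hj => h0 j (Finset.mem_insert_of_mem hj)
    have h1' : ∀ j ∈ s', f j ≤ 1 := fun j hj => h1 j (Finset.mem_insert_of_mem hj)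
    have ha0 := h0 a (Finset.mem_insert_self a s')
    have ha1 := h1 a (Finset.mem_insert_self a s')
    have hs0 : 0 ≤ ∑ j ∈ s', f j := Finset.sum_nonneg h0'
    have := ih h0' h1'
    nlinarith [this]

private lemma sep_count (S : Finset ℝ) (δ A B : ℝ) (hδ : 0 < δ)
    (hsep : ∀ s ∈ S, ∀ t ∈ S, s < t → s + δ ≤ t)
    (hmem : ∀ s ∈ S, A ≤ s ∧ s ≤ B) (hne : S.Nonempty) :
    (S.card : ℝ) * δ ≤ B - A + δ := by
  classical
  obtain ⟨m, hm⟩ : ∃ m, S.card = m := ⟨_, rfl⟩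
  induction m generalizing S B with
  | zero => rw [Finset.card_eq_zero] at hm; simp [hm] at hne
  | succ m ih =>
    rcases Nat.eq_zero_or_pos m with hm0 | hm0
    · subst hm0
      obtain ⟨s, hs⟩ := hne
      have := hmem s hs
      rw [hm]; push_cast; nlinarith [this.1, this.2]
    · set t := S.max' hne with ht
      have htS : t ∈ S := S.max'_mem hne
      set S' := S.erase t with hS'
      have hcard : S'.card = m := by rw [hS', Finset.card_erase_of_mem htS, hm]; omega
      have hne' : S'.Nonempty := Finset.card_pos.mp (by omega)
      have hsub : ∀ s ∈ S', s ∈ S := fun s hs => Finset.mem_of_mem_erase hs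
      have hmem' : ∀ s ∈ S', A ≤ s ∧ s ≤ B - δ := by
        intro s hs
        have hsS := hsub s hs
        have hlt : s < t := lt_of_le_of_ne (S.le_max' s hsS) (Finset.ne_of_mem_erase hs)
        have := hsep s hsS t htS hlt
        have htB := (hmem t htS).2
        exact ⟨(hmem s hsS).1, by linarith⟩
      have := ih S' (B - δ) (fun s hs => fun u hu => hsep s (hsub s hs) u (hsub u hu))
        hmem' hne' hcard
      rw [hm]; push_cast; push_cast [hcard] at this; linarith

section CdeltaFacts
variable {n : ℕ → ℕ} {c : ℕ → ℝ}

private lemma cdelta_zero : cdelta n c 0 = 1 := by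
  simp [cdelta, Finset.Icc_eq_empty (by omega : ¬ (1:ℕ) ≤ 0)]

private lemma cdelta_succ (k : ℕ) :
    cdelta n c (k+1) = cdelta n c k * ((1 - ((n (k+1) : ℝ) - 1) * c (k+1)) / (n (k+1) : ℝ)) := by
  unfold cdelta
  rw [← Finset.prod_Icc_succ_top (by omega : 1 ≤ k + 1)]

private lemma cdelta_pos (h : CantorParams n c) (k : ℕ) : 0 < cdelta n c k := by
  induction k with
  | zero => rw [cdelta_zero]; norm_num
  | succ k ih =>
    rw [cdelta_succ]
    obtain ⟨h1, h2, h3, h4⟩ := h (k+1) (by omega)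
    have : (0:ℝ) < n (k+1) := by positivity
    have : (0:ℝ) < 1 - ((n (k+1) : ℝ) - 1) * c (k+1) := by linarith
    positivity

private lemma cdelta_le_half (h : CantorParams n c) (k : ℕ) :
    cdelta n c (k+1) ≤ cdelta n c k / 2 := by
  rw [cdelta_succ]
  obtain ⟨h1, h2, h3, h4⟩ := h (k+1) (by omega)
  have hn2 : (2:ℝ) ≤ n (k+1) := by exact_mod_cast h1
  have hx : 0 ≤ ((n (k+1) : ℝ) - 1) * c (k+1) := by nlinarith
  have hd := cdelta_pos h k
  have hfrac : (1 - ((n (k+1) : ℝ) - 1) * c (k+1)) / (n (k+1) : ℝ) ≤ 1/2 := by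
    rw [div_le_iff₀ (by linarith)]
    nlinarith
  nlinarith [mul_le_mul_of_nonneg_left hfrac (le_of_lt hd)]

private lemma cdelta_le_pow (h : CantorParams n c) (k : ℕ) :
    cdelta n c k ≤ (1/2)^k := by
  induction k with
  | zero => simp [cdelta_zero]
  | succ k ih =>
    calc cdelta n c (k+1) ≤ cdelta n c k / 2 := cdelta_le_half h k
    _ ≤ (1/2)^k / 2 := by linarith
    _ = (1/2)^(k+1) := by ring

private lemma cdelta_tendsto (h : CantorParams n c) :
    Tendsto (fun k => cdelta n c k) atTop (nhds 0) := by
  apply squeeze_zero (fun k => le_of_lt (cdelta_pos h k)) (cdelta_le_pow h)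
  exact tendsto_pow_atTop_nhds_zero_of_lt_one (by norm_num) (by norm_num)

private lemma ceps_pos (h : CantorParams n c) (k : ℕ) (hk : 1 ≤ k) : 0 < ceps n c k := by
  unfold ceps
  exact mul_pos (h k hk).2.1 (cdelta_pos h _)

/-- key identity: (n-1)(δ' + ε') = δ - δ' at level k+1 -/
private lemma key_identity (h : CantorParams n c) (k : ℕ) :
    ((n (k+1) : ℝ) - 1) * (cdelta n c (k+1) + ceps n c (k+1)) = cdelta n c k - cdelta n c (k+1) := by
  obtain ⟨h1, h2, h3, h4⟩ := h (k+1) (by omega)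
  have hn0 : (n (k+1) : ℝ) ≠ 0 := by positivity
  have he : ceps n c (k+1) = c (k+1) * cdelta n c k := by simp [ceps]
  rw [he, cdelta_succ (n := n) (c := c) k]
  field_simp
  ring

end CdeltaFacts

section LeftptFacts
variable {n : ℕ → ℕ} {c : ℕ → ℝ}

private lemma leftpt_zero (w : ℕ → ℕ) : leftpt n c w 0 = 0 := by
  simp [leftpt, Finset.Icc_eq_empty (by omega : ¬ (1:ℕ) ≤ 0)]

private lemma leftpt_succ (w : ℕ → ℕ) (k : ℕ) :
    leftpt n c w (k+1) = leftpt n c w k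
      + ((w (k+1) : ℝ) - 1) * (cdelta n c (k+1) + ceps n c (k+1)) := by
  unfold leftpt
  rw [← Finset.sum_Icc_succ_top (by omega : 1 ≤ k + 1)]

private lemma leftpt_congr {w w' : ℕ → ℕ} (k : ℕ) (hww' : ∀ j ∈ Finset.Icc 1 k, w j = w' j) :
    leftpt n c w k = leftpt n c w' k := by
  unfold leftpt
  exact Finset.sum_congr rfl (fun j hj => by rw [hww' j hj])

private lemma isWord_mono {w : ℕ → ℕ} {k k' : ℕ} (hkk' : k' ≤ k) (hw : IsWord n w k) :
    IsWord n w k' := fun j hj hjk => hw j hj (le_trans hjk hkk')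

/-- separation of distinct components at the same level -/
private lemma leftpt_sep (h : CantorParams n c) (k : ℕ) :
    ∀ w w', IsWord n w k → IsWord n w' k → leftpt n c w k < leftpt n c w' k →
      leftpt n c w k + cdelta n c k < leftpt n c w' k := by
  induction k with
  | zero => intro w w' _ _ hlt; rw [leftpt_zero, leftpt_zero] at hlt; exact absurd hlt (lt_irrefl 0)
  | succ k ih =>
    intro w w' hw hw' hlt
    have hd := cdelta_pos h (k+1)
    have heps := ceps_pos h (k+1) (by omega)
    have hwk : IsWord n w k := isWord_mono (by omega) hw
    have hw'k : IsWord n w' k := isWord_mono (by omega) hw'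
    have hkey := key_identity h k
    have hw1 := hw (k+1) (by omega) (le_refl _)
    have hw'1 := hw' (k+1) (by omega) (le_refl _)
    have hwr : (1:ℝ) ≤ (w (k+1) : ℝ) := by exact_mod_cast hw1.1
    have hwr2 : ((w (k+1):ℝ)) ≤ (n (k+1) : ℝ) := by exact_mod_cast hw1.2
    have hw'r : (1:ℝ) ≤ (w' (k+1) : ℝ) := by exact_mod_cast hw'1.1
    have hw'r2 : ((w' (k+1):ℝ)) ≤ (n (k+1) : ℝ) := by exact_mod_cast hw'1.2
    rw [leftpt_succ, leftpt_succ] at hlt ⊢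
    rcases lt_trichotomy (leftpt n c w k) (leftpt n c w' k) with hc | hc | hc
    · -- parent components distinct
      have := ih w w' hwk hw'k hc
      have hb : ((w (k+1) : ℝ) - 1) * (cdelta n c (k+1) + ceps n c (k+1))
          ≤ ((n (k+1) : ℝ) - 1) * (cdelta n c (k+1) + ceps n c (k+1)) := by
        apply mul_le_mul_of_nonneg_right (by linarith) (by linarith)
      have hb' : (0:ℝ) ≤ ((w' (k+1) : ℝ) - 1) * (cdelta n c (k+1) + ceps n c (k+1)) := by
        apply mul_nonneg (by linarith) (by linarith)
      nlinarith
    · -- same parent, different child index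
      rw [hc] at hlt ⊢
      have hij : ((w (k+1) : ℝ) - 1) < ((w' (k+1) : ℝ) - 1) := by
        by_contra hcon
        push_neg at hcon
        have : ((w' (k+1) : ℝ) - 1) * (cdelta n c (k+1) + ceps n c (k+1))
            ≤ ((w (k+1) : ℝ) - 1) * (cdelta n c (k+1) + ceps n c (k+1)) :=
          mul_le_mul_of_nonneg_right hcon (by linarith)
        linarith
      have hij1 : ((w (k+1) : ℝ) - 1) + 1 ≤ ((w' (k+1) : ℝ) - 1) := by
        have : w (k+1) < w' (k+1) := by exact_mod_cast (by linarith : (w (k+1):ℝ) < (w' (k+1):ℝ))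
        have : (w (k+1):ℝ) + 1 ≤ (w' (k+1):ℝ) := by exact_mod_cast this
        linarith
      nlinarith [mul_le_mul_of_nonneg_right hij1 (by linarith : (0:ℝ) ≤ cdelta n c (k+1) + ceps n c (k+1))]
    · -- w' parent strictly left of w parent: contradiction
      have := ih w' w hw'k hwk hc
      have hb : ((w' (k+1) : ℝ) - 1) * (cdelta n c (k+1) + ceps n c (k+1))
          ≤ ((n (k+1) : ℝ) - 1) * (cdelta n c (k+1) + ceps n c (k+1)) :=
        mul_le_mul_of_nonneg_right (by linarith) (by linarith)
      have hb' : (0:ℝ) ≤ ((w (k+1) : ℝ) - 1) * (cdelta n c (k+1) + ceps n c (k+1)) :=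
        mul_nonneg (by linarith) (by linarith)
      nlinarith

end LeftptFacts

section Canon

noncomputable def canonWords (n : ℕ → ℕ) (k : ℕ) : Finset (ℕ → ℕ) :=
  letI := Classical.decEq (ℕ → ℕ)
  ((Finset.Icc 1 k).pi (fun j => Finset.Icc 1 (n j))).image
    (fun f j => if h : j ∈ Finset.Icc 1 k then f j h else 1)

variable {n : ℕ → ℕ} {c : ℕ → ℝ}

private lemma mem_canonWords_iff {w : ℕ → ℕ} {k : ℕ} :
    w ∈ canonWords n k ↔ ∃ f ∈ (Finset.Icc 1 k).pi (fun j => Finset.Icc 1 (n j)),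
      (fun j => if h : j ∈ Finset.Icc 1 k then f j h else 1) = w := by
  letI := Classical.decEq (ℕ → ℕ)
  unfold canonWords
  exact Finset.mem_image

private lemma canon_isWord {w : ℕ → ℕ} {k : ℕ} (hw : w ∈ canonWords n k) : IsWord n w k := by
  obtain ⟨f, hf, rfl⟩ := mem_canonWords_iff.mp hw
  intro j hj1 hjk
  have hjm : j ∈ Finset.Icc 1 k := Finset.mem_Icc.mpr ⟨hj1, hjk⟩
  simp only [dif_pos hjm]
  have := (Finset.mem_pi.mp hf) j hjm
  exact Finset.mem_Icc.mp this

private lemma exists_canon {w : ℕ → ℕ} {k : ℕ} (hw : IsWord n w k) :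
    ∃ w' ∈ canonWords n k, ∀ j ∈ Finset.Icc 1 k, w' j = w j := by
  classical
  refine ⟨fun j => if h : j ∈ Finset.Icc 1 k then w j else 1, ?_, ?_⟩
  · apply mem_canonWords_iff.mpr
    refine ⟨fun j _ => w j, ?_, rfl⟩
    rw [Finset.mem_pi]
    intro j hj
    obtain ⟨hj1, hjk⟩ := Finset.mem_Icc.mp hj
    exact Finset.mem_Icc.mpr (hw j hj1 hjk)
  · intro j hj
    show (if h : j ∈ Finset.Icc 1 k then w j else 1) = w j
    rw [dif_pos hj]

private lemma cInt_congr {w w' : ℕ → ℕ} (k : ℕ) (hww' : ∀ j ∈ Finset.Icc 1 k, w j = w' j) :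
    cInt n c w k = cInt n c w' k := by
  unfold cInt; rw [leftpt_congr k hww']

private lemma levelSet_eq (k : ℕ) :
    levelSet n c k = ⋃ w ∈ (canonWords n k : Set (ℕ → ℕ)), cInt n c w k := by
  apply Set.Subset.antisymm
  · intro x hx
    rw [levelSet, Set.mem_iUnion₂] at hx
    obtain ⟨w, hw, hxw⟩ := hx
    obtain ⟨w', hw', hww'⟩ := exists_canon hw
    rw [Set.mem_iUnion₂]
    refine ⟨w', hw', ?_⟩
    rw [← cInt_congr k (fun j hj => (hww' j hj).symm)]
    exact hxw
  · intro x hx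
    rw [Set.mem_iUnion₂] at hx
    obtain ⟨w, hw, hxw⟩ := hx
    rw [levelSet, Set.mem_iUnion₂]
    exact ⟨w, canon_isWord hw, hxw⟩

private lemma measurable_levelSet (k : ℕ) : MeasurableSet (levelSet n c k) := by
  rw [levelSet_eq]
  exact (canonWords n k).measurableSet_biUnion (fun w _ => measurableSet_Icc)

private lemma measurable_E : MeasurableSet (uniformCantorSet n c) :=
  MeasurableSet.iInter (fun k => measurable_levelSet k)

private lemma E_subset_Icc : uniformCantorSet n c ⊆ Set.Icc 0 1 := by
  intro x hx
  have hx0 : x ∈ levelSet n c 0 := Set.mem_iInter.mp hx 0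
  rw [levelSet, Set.mem_iUnion₂] at hx0
  obtain ⟨w, _, hxw⟩ := hx0
  rw [cInt] at hxw
  rw [leftpt_zero, cdelta_zero] at hxw
  simpa using hxw

private lemma E_subset_levelSet (k : ℕ) : uniformCantorSet n c ⊆ levelSet n c k :=
  Set.iInter_subset _ k

end Canon

section MeasureFacts
variable {n : ℕ → ℕ} {c : ℕ → ℝ} {p : ℕ → ℕ → ℝ} {μ : Measure ℝ}

private lemma mu_compl_Icc (hμ : MatchingMeasure n c p μ) : μ (Set.Icc (0:ℝ) 1)ᶜ = 0 :=
  measure_mono_null (Set.compl_subset_compl.mpr E_subset_Icc) hμ.2.1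

private lemma mu_Icc01 (hμ : MatchingMeasure n c p μ) : μ (Set.Icc (0:ℝ) 1) = 1 := by
  have h1 := mu_compl_Icc hμ
  have h2 := measure_add_measure_compl (μ := μ) (measurableSet_Icc : MeasurableSet (Set.Icc (0:ℝ) 1))
  rw [h1, add_zero] at h2
  rw [h2]
  exact hμ.1.measure_univ

private lemma mu_cInt (hp : MatchingSeq n p) (hμ : MatchingMeasure n c p μ) :
    ∀ k w, IsWord n w k →
      μ (cInt n c w k) = ENNReal.ofReal (∏ j ∈ Finset.Icc 1 k, p j (w j)) := by
  intro k
  induction k with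
  | zero =>
    intro w _
    have hI : cInt n c w 0 = Set.Icc 0 1 := by
      unfold cInt; rw [leftpt_zero, cdelta_zero]; norm_num
    rw [hI, mu_Icc01 hμ]
    rw [Finset.Icc_eq_empty (by omega : ¬ (1:ℕ) ≤ 0)]
    simp
  | succ k ih =>
    intro w hw
    have hw1 := hw (k+1) (by omega) (le_refl _)
    have hwk : IsWord n w k := isWord_mono (by omega) hw
    have hrec := hμ.2.2 (k+1) (by omega) w (by simpa using hwk) (w (k+1)) hw1.1 hw1.2
    rw [Function.update_eq_self] at hrec
    simp only [Nat.add_sub_cancel] at hrec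
    rw [hrec, ih w hwk]
    have hppos : 0 < p (k+1) (w (k+1)) := (hp (k+1) (by omega)).1 _ hw1.1 hw1.2
    rw [Finset.prod_Icc_succ_top (by omega : 1 ≤ k + 1)]
    rw [mul_comm (ENNReal.ofReal (p (k+1) (w (k+1))))]
    rw [ENNReal.ofReal_mul' (le_of_lt hppos)]

end MeasureFacts

section ThetaFacts
variable {n : ℕ → ℕ} {c : ℕ → ℝ}

/-- partial product of (1 - (n_j - 1) c_j) -/
noncomputable def thetaPartial (n : ℕ → ℕ) (c : ℕ → ℝ) (k : ℕ) : ℝ :=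
  ∏ j ∈ Finset.Icc 1 k, (1 - ((n j : ℝ) - 1) * c j)

private lemma thetaPartial_pos (h : CantorParams n c) (k : ℕ) : 0 < thetaPartial n c k := by
  apply Finset.prod_pos
  intro j hj
  obtain ⟨hj1, _⟩ := Finset.mem_Icc.mp hj
  have := (h j hj1).2.2.2
  linarith

private lemma thetaPartial_le_one (h : CantorParams n c) (k : ℕ) : thetaPartial n c k ≤ 1 := by
  apply Finset.prod_le_one
  · intro j hj
    obtain ⟨hj1, _⟩ := Finset.mem_Icc.mp hj
    have := (h j hj1).2.2.2
    linarith
  · intro j hj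
    obtain ⟨hj1, _⟩ := Finset.mem_Icc.mp hj
    obtain ⟨hn2, hc0, _, _⟩ := h j hj1
    have : (1:ℝ) ≤ (n j : ℝ) := by exact_mod_cast le_trans (by omega) hn2
    nlinarith

private lemma cdelta_eq_theta_mul (k : ℕ) :
    cdelta n c k = thetaPartial n c k * ∏ j ∈ Finset.Icc 1 k, ((n j : ℝ))⁻¹ := by
  unfold cdelta thetaPartial
  rw [← Finset.prod_mul_distrib]
  apply Finset.prod_congr rfl
  intro j _
  rw [div_eq_mul_inv]

private lemma theta_exists (h : CantorParams n c) (hsum : Summable fun k => (n k : ℝ) * c k) :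
    ∃ θ : ℝ, 0 < θ ∧ ∀ k, θ ≤ thetaPartial n c k := by
  have hx01 : ∀ j, 1 ≤ j → 0 ≤ ((n j : ℝ) - 1) * c j ∧ ((n j : ℝ) - 1) * c j ≤ 1 := by
    intro j hj
    obtain ⟨hn2, hc0, _, hlt⟩ := h j hj
    have : (1:ℝ) ≤ (n j : ℝ) := by exact_mod_cast le_trans (by omega) hn2
    constructor
    · apply mul_nonneg (by linarith) (le_of_lt hc0)
    · linarith
  obtain ⟨s, hs⟩ := summable_iff_vanishing.mp hsum (Metric.ball 0 (1/2)) (Metric.ball_mem_nhds 0 (by norm_num))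
  set J := s.sup id with hJ
  have htail : ∀ k, J < k → ∑ j ∈ Finset.Ioc J k, ((n j : ℝ) - 1) * c j < 1/2 := by
    intro k hk
    have hdisj : Disjoint (Finset.Ioc J k) s := by
      rw [Finset.disjoint_left]
      intro j hj hjs
      have : j ≤ J := Finset.le_sup (f := id) hjs
      have := (Finset.mem_Ioc.mp hj).1
      omega
    have h1 := hs _ hdisj
    rw [Metric.mem_ball, Real.dist_eq, sub_zero] at h1
    have h2 : ∑ j ∈ Finset.Ioc J k, ((n j : ℝ) - 1) * c j ≤ ∑ j ∈ Finset.Ioc J k, (n j : ℝ) * c j := by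
      apply Finset.sum_le_sum
      intro j hj
      have hj1 : 1 ≤ j := by have := (Finset.mem_Ioc.mp hj).1; omega
      obtain ⟨_, hc0, _, _⟩ := h j hj1
      nlinarith
    calc ∑ j ∈ Finset.Ioc J k, ((n j : ℝ) - 1) * c j ≤ ∑ j ∈ Finset.Ioc J k, (n j : ℝ) * c j := h2
      _ ≤ |∑ j ∈ Finset.Ioc J k, (n j : ℝ) * c j| := le_abs_self _
      _ < 1/2 := h1
  set m := (Finset.range (J+1)).inf' (Finset.nonempty_range_iff.mpr (Nat.succ_ne_zero J)) (fun k => thetaPartial n c k) with hm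
  have hmpos : 0 < m := by
    rw [hm, Finset.lt_inf'_iff]
    intro b _
    exact thetaPartial_pos h b
  refine ⟨m / 2, by linarith, ?_⟩
  intro k
  rcases le_or_gt k J with hkJ | hkJ
  · have : m ≤ thetaPartial n c k :=
      Finset.inf'_le _ (Finset.mem_range.mpr (by omega))
    linarith
  · have hsplit : thetaPartial n c J * (∏ j ∈ Finset.Ioc J k, (1 - ((n j : ℝ) - 1) * c j))
        = thetaPartial n c k := by
      unfold thetaPartial
      have e : ∀ M : ℕ, Finset.Icc 1 M = Finset.Ioc 0 M := fun M => by
        rw [← Finset.Icc_add_one_left_eq_Ioc, zero_add]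
      rw [e J, e k]
      exact Finset.prod_Ioc_consecutive _ (by omega) (by omega)
    have hJm : m ≤ thetaPartial n c J :=
      Finset.inf'_le _ (Finset.mem_range.mpr (by omega))
    have hge : (1:ℝ)/2 ≤ ∏ j ∈ Finset.Ioc J k, (1 - ((n j : ℝ) - 1) * c j) := by
      have := prod_one_sub_ge (Finset.Ioc J k) (fun j => ((n j : ℝ) - 1) * c j)
        (fun j hj => (hx01 j (by have := (Finset.mem_Ioc.mp hj).1; omega)).1)
        (fun j hj => (hx01 j (by have := (Finset.mem_Ioc.mp hj).1; omega)).2)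
      have := htail k hkJ
      linarith [prod_one_sub_ge (Finset.Ioc J k) (fun j => ((n j : ℝ) - 1) * c j)
        (fun j hj => (hx01 j (by have := (Finset.mem_Ioc.mp hj).1; omega)).1)
        (fun j hj => (hx01 j (by have := (Finset.mem_Ioc.mp hj).1; omega)).2)]
    calc m / 2 = m * (1/2) := by ring
    _ ≤ thetaPartial n c J * (∏ j ∈ Finset.Ioc J k, (1 - ((n j : ℝ) - 1) * c j)) := by
        apply mul_le_mul hJm hge (by norm_num) (le_of_lt (thetaPartial_pos h J))
    _ = thetaPartial n c k := hsplit

end ThetaFacts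

section ProdBounds
variable {n : ℕ → ℕ} {c : ℕ → ℝ} {p : ℕ → ℕ → ℝ}

noncomputable def pminf (n : ℕ → ℕ) (p : ℕ → ℕ → ℝ) (j : ℕ) : ℝ :=
  if h : (Finset.Icc 1 (n j)).Nonempty then (Finset.Icc 1 (n j)).inf' h (p j) else 1

private lemma icc_eq_ioc : ∀ M : ℕ, Finset.Icc 1 M = Finset.Ioc 0 M := fun M => by
  rw [← Finset.Icc_add_one_left_eq_Ioc, zero_add]

private lemma pminf_pos (h : CantorParams n c) (hp : MatchingSeq n p) (j : ℕ) (hj : 1 ≤ j) :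
    0 < pminf n p j := by
  unfold pminf
  have hne : (Finset.Icc 1 (n j)).Nonempty := by
    refine ⟨1, Finset.mem_Icc.mpr ⟨le_refl _, ?_⟩⟩
    have := (h j hj).1; omega
  rw [dif_pos hne, Finset.lt_inf'_iff]
  intro b hb
  obtain ⟨hb1, hb2⟩ := Finset.mem_Icc.mp hb
  exact (hp j hj).1 b hb1 hb2

private lemma pminf_le (h : CantorParams n c) {w : ℕ → ℕ} (j : ℕ) (hj : 1 ≤ j)
    (hwj : 1 ≤ w j ∧ w j ≤ n j) : pminf n p j ≤ p j (w j) := by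
  unfold pminf
  have hne : (Finset.Icc 1 (n j)).Nonempty := by
    refine ⟨1, Finset.mem_Icc.mpr ⟨le_refl _, ?_⟩⟩
    have := (h j hj).1; omega
  rw [dif_pos hne]
  exact Finset.inf'_le _ (Finset.mem_Icc.mpr hwj)

private lemma p_le_one (hp : MatchingSeq n p) (j : ℕ) (hj : 1 ≤ j) (i : ℕ)
    (hi : 1 ≤ i ∧ i ≤ n j) : p j i ≤ 1 := by
  obtain ⟨hpos, hsum1⟩ := hp j hj
  have hle : p j i ≤ ∑ t ∈ Finset.Icc 1 (n j), p j t := by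
    apply Finset.single_le_sum
    · intro t ht
      obtain ⟨h1, h2⟩ := Finset.mem_Icc.mp ht
      exact le_of_lt (hpos t h1 h2)
    · exact Finset.mem_Icc.mpr hi
  linarith

/-- splitting of the word product past level k₀-1, where p is 1-uniform -/
private lemma prodp_split (h : CantorParams n c) {k₀ : ℕ} (hk₀ : 1 ≤ k₀)
    (huni : ∀ k, k₀ ≤ k → ∀ i, 1 ≤ i → i ≤ n k → p k i = 1 / (n k : ℝ))
    {k : ℕ} (hk : k₀ - 1 ≤ k) {w : ℕ → ℕ} (hw : IsWord n w k) :
    ∏ j ∈ Finset.Icc 1 k, p j (w j) =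
      (∏ j ∈ Finset.Icc 1 (k₀-1), p j (w j)) * ∏ j ∈ Finset.Ioc (k₀-1) k, ((n j : ℝ))⁻¹ := by
  rw [icc_eq_ioc k, ← Finset.prod_Ioc_consecutive (fun j => p j (w j)) (Nat.zero_le (k₀-1)) hk,
    ← icc_eq_ioc]
  congr 1
  apply Finset.prod_congr rfl
  intro j hj
  obtain ⟨hj1, hj2⟩ := Finset.mem_Ioc.mp hj
  have hj1' : 1 ≤ j := by omega
  have hjk₀ : k₀ ≤ j := by omega
  have hwj := hw j hj1' hj2
  rw [huni j hjk₀ (w j) hwj.1 hwj.2, one_div]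

private lemma inv_prod_eq (h : CantorParams n c) (k : ℕ) :
    ∏ j ∈ Finset.Icc 1 k, ((n j : ℝ))⁻¹ = cdelta n c k / thetaPartial n c k := by
  rw [cdelta_eq_theta_mul, mul_comm, mul_div_assoc,
    div_self (ne_of_gt (thetaPartial_pos h k)), mul_one]

private lemma prodp_upper (h : CantorParams n c) (hp : MatchingSeq n p) {k₀ : ℕ} (hk₀ : 1 ≤ k₀)
    (huni : ∀ k, k₀ ≤ k → ∀ i, 1 ≤ i → i ≤ n k → p k i = 1 / (n k : ℝ))
    {θ : ℝ} (hθ0 : 0 < θ) (hθ : ∀ k, θ ≤ thetaPartial n c k)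
    {k : ℕ} (hk : k₀ - 1 ≤ k) {w : ℕ → ℕ} (hw : IsWord n w k) :
    ∏ j ∈ Finset.Icc 1 k, p j (w j)
      ≤ ((∏ j ∈ Finset.Icc 1 (k₀-1), (n j : ℝ)) / θ) * cdelta n c k := by
  have hnpos : ∀ j : ℕ, 1 ≤ j → (0:ℝ) < (n j : ℝ) := by
    intro j hj; have := (h j hj).1; positivity
  rw [prodp_split h hk₀ huni hk hw]
  set N := ∏ j ∈ Finset.Icc 1 (k₀-1), (n j : ℝ) with hN
  have hNpos : 0 < N := Finset.prod_pos (fun j hj => hnpos j (Finset.mem_Icc.mp hj).1)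
  -- first factor ≤ 1
  have h1 : ∏ j ∈ Finset.Icc 1 (k₀-1), p j (w j) ≤ 1 := by
    apply Finset.prod_le_one
    · intro j hj
      obtain ⟨hj1, hj2⟩ := Finset.mem_Icc.mp hj
      exact le_of_lt ((hp j hj1).1 (w j) (hw j hj1 (by omega)).1 (hw j hj1 (by omega)).2)
    · intro j hj
      obtain ⟨hj1, hj2⟩ := Finset.mem_Icc.mp hj
      exact p_le_one hp j hj1 (w j) (hw j hj1 (by omega))
  -- second factor = N * full inverse product
  have h2 : ∏ j ∈ Finset.Ioc (k₀-1) k, ((n j : ℝ))⁻¹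
      = N * ∏ j ∈ Finset.Icc 1 k, ((n j : ℝ))⁻¹ := by
    rw [icc_eq_ioc k, ← Finset.prod_Ioc_consecutive (fun j => ((n j : ℝ))⁻¹)
      (Nat.zero_le (k₀-1)) hk, ← icc_eq_ioc, hN]
    rw [← mul_assoc, ← Finset.prod_mul_distrib]
    rw [Finset.prod_congr rfl (fun j hj => mul_inv_cancel₀
      (ne_of_gt (hnpos j (Finset.mem_Icc.mp hj).1)))]
    rw [Finset.prod_const_one, one_mul]
  have h3 : ∏ j ∈ Finset.Icc 1 k, ((n j : ℝ))⁻¹ ≤ cdelta n c k / θ := by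
    rw [inv_prod_eq h k]
    apply div_le_div_of_nonneg_left (le_of_lt (cdelta_pos h k)) hθ0 (hθ k)
  have hprodinv_pos : (0:ℝ) < ∏ j ∈ Finset.Icc 1 k, ((n j : ℝ))⁻¹ :=
    Finset.prod_pos (fun j hj => inv_pos.mpr (hnpos j (Finset.mem_Icc.mp hj).1))
  have hfirst_pos : (0:ℝ) ≤ ∏ j ∈ Finset.Icc 1 (k₀-1), p j (w j) := by
    apply Finset.prod_nonneg
    intro j hj
    obtain ⟨hj1, hj2⟩ := Finset.mem_Icc.mp hj
    exact le_of_lt ((hp j hj1).1 (w j) (hw j hj1 (by omega)).1 (hw j hj1 (by omega)).2)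
  calc (∏ j ∈ Finset.Icc 1 (k₀-1), p j (w j)) * ∏ j ∈ Finset.Ioc (k₀-1) k, ((n j : ℝ))⁻¹
      ≤ 1 * ∏ j ∈ Finset.Ioc (k₀-1) k, ((n j : ℝ))⁻¹ := by
        apply mul_le_mul_of_nonneg_right h1
        rw [h2]; positivity
    _ = N * ∏ j ∈ Finset.Icc 1 k, ((n j : ℝ))⁻¹ := by rw [one_mul, h2]
    _ ≤ N * (cdelta n c k / θ) := by
        apply mul_le_mul_of_nonneg_left h3 (le_of_lt hNpos)
    _ = N / θ * cdelta n c k := by ring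

private lemma prodp_lower (h : CantorParams n c) (hp : MatchingSeq n p) {k₀ : ℕ} (hk₀ : 1 ≤ k₀)
    (huni : ∀ k, k₀ ≤ k → ∀ i, 1 ≤ i → i ≤ n k → p k i = 1 / (n k : ℝ))
    {k : ℕ} (hk : k₀ - 1 ≤ k) {w : ℕ → ℕ} (hw : IsWord n w k) :
    (∏ j ∈ Finset.Icc 1 (k₀-1), pminf n p j) * cdelta n c k
      ≤ ∏ j ∈ Finset.Icc 1 k, p j (w j) := by
  have hnpos : ∀ j : ℕ, 1 ≤ j → (0:ℝ) < (n j : ℝ) := by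
    intro j hj; have := (h j hj).1; positivity
  rw [prodp_split h hk₀ huni hk hw]
  set a₀ := ∏ j ∈ Finset.Icc 1 (k₀-1), pminf n p j with ha₀
  have ha₀pos : 0 < a₀ := Finset.prod_pos (fun j hj => pminf_pos h hp j (Finset.mem_Icc.mp hj).1)
  have h1 : a₀ ≤ ∏ j ∈ Finset.Icc 1 (k₀-1), p j (w j) := by
    apply Finset.prod_le_prod
    · intro j hj
      exact le_of_lt (pminf_pos h hp j (Finset.mem_Icc.mp hj).1)
    · intro j hj
      obtain ⟨hj1, hj2⟩ := Finset.mem_Icc.mp hj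
      exact pminf_le h j hj1 (hw j hj1 (by omega))
  have h2 : cdelta n c k ≤ ∏ j ∈ Finset.Ioc (k₀-1) k, ((n j : ℝ))⁻¹ := by
    have hQall : ∏ j ∈ Finset.Icc 1 k, ((n j : ℝ))⁻¹ ≤ ∏ j ∈ Finset.Ioc (k₀-1) k, ((n j : ℝ))⁻¹ := by
      rw [icc_eq_ioc k, ← Finset.prod_Ioc_consecutive (fun j => ((n j : ℝ))⁻¹)
        (Nat.zero_le (k₀-1)) hk]
      have hq2pos : (0:ℝ) < ∏ j ∈ Finset.Ioc (k₀-1) k, ((n j : ℝ))⁻¹ :=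
        Finset.prod_pos (fun j hj => inv_pos.mpr (hnpos j (by
          have := (Finset.mem_Ioc.mp hj).1; omega)))
      have hq1le : ∏ j ∈ Finset.Ioc 0 (k₀-1), ((n j : ℝ))⁻¹ ≤ 1 := by
        apply Finset.prod_le_one
        · intro j hj
          exact le_of_lt (inv_pos.mpr (hnpos j (by have := (Finset.mem_Ioc.mp hj).1; omega)))
        · intro j hj
          have hj1 : 1 ≤ j := by have := (Finset.mem_Ioc.mp hj).1; omega
          rw [inv_le_one_iff₀]
          right
          exact_mod_cast le_trans (by omega) (h j hj1).1
      nlinarith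
    have hdelta : cdelta n c k ≤ ∏ j ∈ Finset.Icc 1 k, ((n j : ℝ))⁻¹ := by
      rw [cdelta_eq_theta_mul]
      have hpr : (0:ℝ) < ∏ j ∈ Finset.Icc 1 k, ((n j : ℝ))⁻¹ :=
        Finset.prod_pos (fun j hj => inv_pos.mpr (hnpos j (Finset.mem_Icc.mp hj).1))
      nlinarith [thetaPartial_le_one h k, thetaPartial_pos h k]
    linarith
  have h3 : 0 ≤ cdelta n c k := le_of_lt (cdelta_pos h k)
  have h4 : 0 ≤ ∏ j ∈ Finset.Icc 1 (k₀-1), p j (w j) := le_trans (le_of_lt ha₀pos) h1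
  exact mul_le_mul h1 h2 h3 h4

end ProdBounds

section Components
variable {n : ℕ → ℕ} {c : ℕ → ℝ} {p : ℕ → ℕ → ℝ} {μ : Measure ℝ}

noncomputable def compLefts (n : ℕ → ℕ) (c : ℕ → ℝ) (k : ℕ) : Finset ℝ :=
  letI := Classical.decEq ℝ
  (canonWords n k).image (fun w => leftpt n c w k)

private lemma mem_compLefts_iff {t : ℝ} {k : ℕ} :
    t ∈ compLefts n c k ↔ ∃ w ∈ canonWords n k, leftpt n c w k = t := by
  letI := Classical.decEq ℝ
  unfold compLefts
  exact Finset.mem_image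

private lemma compLefts_sep (h : CantorParams n c) {k : ℕ} {t t' : ℝ}
    (ht : t ∈ compLefts n c k) (ht' : t' ∈ compLefts n c k) (hlt : t < t') :
    t + cdelta n c k < t' := by
  obtain ⟨w, hw, rfl⟩ := mem_compLefts_iff.mp ht
  obtain ⟨w', hw', rfl⟩ := mem_compLefts_iff.mp ht'
  exact leftpt_sep h k w w' (canon_isWord hw) (canon_isWord hw') hlt

private lemma compLefts_disjoint (h : CantorParams n c) {k : ℕ} {t t' : ℝ}
    (ht : t ∈ compLefts n c k) (ht' : t' ∈ compLefts n c k) (hne : t ≠ t') :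
    Disjoint (Set.Icc t (t + cdelta n c k)) (Set.Icc t' (t' + cdelta n c k)) := by
  rw [Set.disjoint_left]
  intro x hx hx'
  rcases lt_or_gt_of_ne hne with hlt | hlt
  · have := compLefts_sep h ht ht' hlt
    have h1 : x ≤ t + cdelta n c k := hx.2
    have h2 : t' ≤ x := hx'.1
    linarith
  · have := compLefts_sep h ht' ht hlt
    have h1 : x ≤ t' + cdelta n c k := hx'.2
    have h2 : t ≤ x := hx.1
    linarith

private lemma levelSet_subset_comps (k : ℕ) :
    levelSet n c k ⊆ ⋃ t ∈ (compLefts n c k : Set ℝ), Set.Icc t (t + cdelta n c k) := by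
  rw [levelSet_eq]
  intro x hx
  obtain ⟨w, hw, hxw⟩ := Set.mem_iUnion₂.mp hx
  refine Set.mem_iUnion₂.mpr ⟨leftpt n c w k, ?_, hxw⟩
  exact_mod_cast mem_compLefts_iff.mpr ⟨w, hw, rfl⟩

private lemma mu_comp_ge (h : CantorParams n c) (hp : MatchingSeq n p)
    (hμ : MatchingMeasure n c p μ) {k₀ : ℕ} (hk₀ : 1 ≤ k₀)
    (huni : ∀ k, k₀ ≤ k → ∀ i, 1 ≤ i → i ≤ n k → p k i = 1 / (n k : ℝ))
    {k : ℕ} (hk : k₀ - 1 ≤ k) {t : ℝ} (ht : t ∈ compLefts n c k) :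
    ENNReal.ofReal ((∏ j ∈ Finset.Icc 1 (k₀-1), pminf n p j) * cdelta n c k)
        ≤ μ (Set.Icc t (t + cdelta n c k)) := by
  obtain ⟨w, hw, rfl⟩ := mem_compLefts_iff.mp ht
  have hword := canon_isWord hw
  have hIcc : Set.Icc (leftpt n c w k) (leftpt n c w k + cdelta n c k) = cInt n c w k := rfl
  rw [hIcc, mu_cInt hp hμ k w hword]
  exact ENNReal.ofReal_le_ofReal (prodp_lower h hp hk₀ huni hk hword)

private lemma mu_comp_le (h : CantorParams n c) (hp : MatchingSeq n p)
    (hμ : MatchingMeasure n c p μ) {k₀ : ℕ} (hk₀ : 1 ≤ k₀)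
    (huni : ∀ k, k₀ ≤ k → ∀ i, 1 ≤ i → i ≤ n k → p k i = 1 / (n k : ℝ))
    {θ : ℝ} (hθ0 : 0 < θ) (hθ : ∀ k, θ ≤ thetaPartial n c k)
    {k : ℕ} (hk : k₀ - 1 ≤ k) {t : ℝ} (ht : t ∈ compLefts n c k) :
    μ (Set.Icc t (t + cdelta n c k))
        ≤ ENNReal.ofReal (((∏ j ∈ Finset.Icc 1 (k₀-1), (n j : ℝ)) / θ) * cdelta n c k) := by
  obtain ⟨w, hw, rfl⟩ := mem_compLefts_iff.mp ht
  have hword := canon_isWord hw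
  have hIcc : Set.Icc (leftpt n c w k) (leftpt n c w k + cdelta n c k) = cInt n c w k := rfl
  rw [hIcc, mu_cInt hp hμ k w hword]
  exact ENNReal.ofReal_le_ofReal (prodp_upper h hp hk₀ huni hθ0 hθ hk hword)

end Components

section KeyEstimates
variable {n : ℕ → ℕ} {c : ℕ → ℝ} {p : ℕ → ℕ → ℝ} {μ : Measure ℝ}

private lemma mu_Icc_le (h : CantorParams n c) (hp : MatchingSeq n p)
    (hμ : MatchingMeasure n c p μ) {k₀ : ℕ} (hk₀ : 1 ≤ k₀)
    (huni : ∀ k, k₀ ≤ k → ∀ i, 1 ≤ i → i ≤ n k → p k i = 1 / (n k : ℝ))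
    {θ : ℝ} (hθ0 : 0 < θ) (hθ : ∀ k, θ ≤ thetaPartial n c k)
    (a b : ℝ) (hab : a ≤ b) :
    μ (Set.Icc a b) ≤
      ENNReal.ofReal (((∏ j ∈ Finset.Icc 1 (k₀-1), (n j : ℝ)) / θ) * (b - a)) := by
  classical
  set B : ℝ := (∏ j ∈ Finset.Icc 1 (k₀-1), (n j : ℝ)) / θ with hB
  have hBpos : 0 < B := by
    apply div_pos _ hθ0
    apply Finset.prod_pos
    intro j hj
    have := (h j (Finset.mem_Icc.mp hj).1).1
    positivity
  have key : ∀ k, k₀ - 1 ≤ k →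
      μ (Set.Icc a b) ≤ ENNReal.ofReal (B * (b - a) + 2 * B * cdelta n c k) := by
    intro k hk
    have hδpos := cdelta_pos h k
    set T := compLefts n c k with hT
    set M := T.filter (fun t => t ≤ b ∧ a ≤ t + cdelta n c k) with hM
    have hMsub : ∀ t ∈ M, t ∈ T := fun t ht => (Finset.mem_filter.mp ht).1
    -- covering
    have hcover : Set.Icc a b ⊆
        (⋃ t ∈ (M : Set ℝ), Set.Icc t (t + cdelta n c k)) ∪ (uniformCantorSet n c)ᶜ := by
      intro x hx
      by_cases hxE : x ∈ uniformCantorSet n c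
      · left
        have hxk := levelSet_subset_comps (n := n) (c := c) k (E_subset_levelSet k hxE)
        obtain ⟨t, ht, hxt⟩ := Set.mem_iUnion₂.mp hxk
        refine Set.mem_iUnion₂.mpr ⟨t, ?_, hxt⟩
        have : t ∈ M := by
          rw [hM]
          refine Finset.mem_filter.mpr ⟨by exact_mod_cast ht, le_trans hxt.1 hx.2,
            le_trans hx.1 hxt.2⟩
        exact_mod_cast this
      · right; exact hxE
    have hmu : μ (Set.Icc a b) ≤ ∑ t ∈ M, μ (Set.Icc t (t + cdelta n c k)) := by
      have h1 := measure_mono (μ := μ) hcover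
      have h2 := measure_union_le (μ := μ)
        (⋃ t ∈ (M : Set ℝ), Set.Icc t (t + cdelta n c k)) (uniformCantorSet n c)ᶜ
      rw [hμ.2.1, add_zero] at h2
      exact le_trans (le_trans h1 h2) (measure_biUnion_finset_le M _)
    have hcomp : ∀ t ∈ M, μ (Set.Icc t (t + cdelta n c k))
        ≤ ENNReal.ofReal (B * cdelta n c k) :=
      fun t ht => mu_comp_le h hp hμ hk₀ huni hθ0 hθ hk (hMsub t ht)
    have hcount : (M.card : ℝ) * cdelta n c k ≤ (b - a) + 2 * cdelta n c k := by
      rcases M.eq_empty_or_nonempty with hMe | hMne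
      · rw [hMe]; simp; linarith
      · have hsep : ∀ s ∈ M, ∀ t ∈ M, s < t → s + cdelta n c k ≤ t :=
          fun s hs t ht hst => le_of_lt (compLefts_sep h (hMsub s hs) (hMsub t ht) hst)
        have hmem : ∀ t ∈ M, a - cdelta n c k ≤ t ∧ t ≤ b := by
          intro t ht
          obtain ⟨_, h1, h2⟩ := Finset.mem_filter.mp ht
          exact ⟨by linarith, h1⟩
        have := sep_count M (cdelta n c k) (a - cdelta n c k) b hδpos hsep hmem hMne
        linarith
    calc μ (Set.Icc a b) ≤ ∑ t ∈ M, μ (Set.Icc t (t + cdelta n c k)) := hmu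
      _ ≤ M.card • ENNReal.ofReal (B * cdelta n c k) := Finset.sum_le_card_nsmul _ _ _ hcomp
      _ = ENNReal.ofReal ((M.card : ℝ) * (B * cdelta n c k)) := by
          rw [nsmul_eq_mul, ← ENNReal.ofReal_natCast M.card,
            ← ENNReal.ofReal_mul (by positivity)]
      _ ≤ ENNReal.ofReal (B * (b - a) + 2 * B * cdelta n c k) := by
          apply ENNReal.ofReal_le_ofReal
          nlinarith [hcount, hBpos]
  have hlim : Tendsto (fun k => ENNReal.ofReal (B * (b - a) + 2 * B * cdelta n c k)) atTop
      (nhds (ENNReal.ofReal (B * (b - a)))) := by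
    have h1 : Tendsto (fun k => B * (b - a) + 2 * B * cdelta n c k) atTop
        (nhds (B * (b - a))) := by
      have h2 := (cdelta_tendsto h).const_mul (2 * B)
      rw [mul_zero] at h2
      simpa using tendsto_const_nhds.add h2
    exact (ENNReal.continuous_ofReal.continuousAt.tendsto).comp h1
  apply ge_of_tendsto hlim
  filter_upwards [eventually_ge_atTop (k₀ - 1)] with k hk
  exact key k hk

private lemma mu_Ioo_ge (h : CantorParams n c) (hp : MatchingSeq n p)
    (hμ : MatchingMeasure n c p μ) {k₀ : ℕ} (hk₀ : 1 ≤ k₀)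
    (huni : ∀ k, k₀ ≤ k → ∀ i, 1 ≤ i → i ≤ n k → p k i = 1 / (n k : ℝ))
    (a b : ℝ) :
    ENNReal.ofReal (∏ j ∈ Finset.Icc 1 (k₀-1), pminf n p j)
        * volume (Set.Ioo a b ∩ uniformCantorSet n c) ≤ μ (Set.Ioo a b) := by
  classical
  rcases le_or_gt b a with hba | hab
  · rw [Set.Ioo_eq_empty (not_lt.mpr hba)]
    simp
  set a₀ : ℝ := ∏ j ∈ Finset.Icc 1 (k₀-1), pminf n p j with ha₀
  have ha₀pos : 0 < a₀ :=
    Finset.prod_pos (fun j hj => pminf_pos h hp j (Finset.mem_Icc.mp hj).1)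
  have hEmeas : MeasurableSet (uniformCantorSet n c) := measurable_E
  have hvolfin : volume (Set.Ioo a b ∩ uniformCantorSet n c) ≠ ⊤ := by
    apply ne_of_lt
    calc volume (Set.Ioo a b ∩ uniformCantorSet n c) ≤ volume (Set.Ioo a b) :=
        measure_mono Set.inter_subset_left
      _ = ENNReal.ofReal (b - a) := Real.volume_Ioo
      _ < ⊤ := ENNReal.ofReal_lt_top
  set m : ℝ := (volume (Set.Ioo a b ∩ uniformCantorSet n c)).toReal with hm
  have hm0 : 0 ≤ m := ENNReal.toReal_nonneg
  have key : ∀ k, k₀ - 1 ≤ k →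
      ENNReal.ofReal (a₀ * (m - 2 * cdelta n c k)) ≤ μ (Set.Ioo a b) := by
    intro k hk
    have hδpos := cdelta_pos h k
    set T := compLefts n c k with hT
    set S := T.filter (fun t => a < t ∧ t + cdelta n c k < b) with hS
    set Mt := T.filter (fun t => t < b ∧ a < t + cdelta n c k) with hMt
    have hSsub : ∀ t ∈ S, t ∈ T := fun t ht => (Finset.mem_filter.mp ht).1
    have hMtsub : ∀ t ∈ Mt, t ∈ T := fun t ht => (Finset.mem_filter.mp ht).1
    -- Step 1 : volume of Ioo ∩ E bounded by comps meeting Ioo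
    have hvol1 : volume (Set.Ioo a b ∩ uniformCantorSet n c)
        ≤ ENNReal.ofReal ((Mt.card : ℝ) * cdelta n c k) := by
      have hcov : Set.Ioo a b ∩ uniformCantorSet n c
          ⊆ ⋃ t ∈ (Mt : Set ℝ), Set.Icc t (t + cdelta n c k) := by
        rintro x ⟨hxI, hxE⟩
        have hxk := levelSet_subset_comps (n := n) (c := c) k (E_subset_levelSet k hxE)
        obtain ⟨t, ht, hxt⟩ := Set.mem_iUnion₂.mp hxk
        refine Set.mem_iUnion₂.mpr ⟨t, ?_, hxt⟩
        have : t ∈ Mt := by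
          rw [hMt]
          exact Finset.mem_filter.mpr ⟨by exact_mod_cast ht,
            lt_of_le_of_lt hxt.1 hxI.2, lt_of_lt_of_le hxI.1 hxt.2⟩
        exact_mod_cast this
      calc volume (Set.Ioo a b ∩ uniformCantorSet n c)
          ≤ volume (⋃ t ∈ (Mt : Set ℝ), Set.Icc t (t + cdelta n c k)) := measure_mono hcov
        _ ≤ ∑ t ∈ Mt, volume (Set.Icc t (t + cdelta n c k)) := measure_biUnion_finset_le Mt _
        _ = ∑ t ∈ Mt, ENNReal.ofReal (cdelta n c k) := by
            apply Finset.sum_congr rfl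
            intro t _
            rw [Real.volume_Icc, add_sub_cancel_left]
        _ = Mt.card • ENNReal.ofReal (cdelta n c k) := by rw [Finset.sum_const]
        _ = ENNReal.ofReal ((Mt.card : ℝ) * cdelta n c k) := by
            rw [nsmul_eq_mul, ← ENNReal.ofReal_natCast Mt.card,
              ← ENNReal.ofReal_mul (by positivity)]
    -- Step 2 : card Mt ≤ card S + 2
    have hcard : Mt.card ≤ S.card + 2 := by
      set Ta := T.filter (fun t => t ≤ a ∧ a ≤ t + cdelta n c k) with hTa
      set Tb := T.filter (fun t => t ≤ b ∧ b ≤ t + cdelta n c k) with hTb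
      have hsub : Mt ⊆ S ∪ Ta ∪ Tb := by
        intro t ht
        obtain ⟨htT, ht1, ht2⟩ := Finset.mem_filter.mp ht
        by_cases hts : a < t ∧ t + cdelta n c k < b
        · exact Finset.mem_union_left _ (Finset.mem_union_left _
            (Finset.mem_filter.mpr ⟨htT, hts⟩))
        · push_neg at hts
          rcases le_or_gt t a with hta | hta
          · exact Finset.mem_union_left _ (Finset.mem_union_right _
              (Finset.mem_filter.mpr ⟨htT, hta, le_of_lt ht2⟩))
          · have := hts hta
            exact Finset.mem_union_right _
              (Finset.mem_filter.mpr ⟨htT, le_of_lt ht1, this⟩)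
      have hcard1 : ∀ (y : ℝ) (Ty : Finset ℝ), Ty = T.filter (fun t => t ≤ y ∧ y ≤ t + cdelta n c k) →
          Ty.card ≤ 1 := by
        intro y Ty hTy
        apply Finset.card_le_one.mpr
        intro t ht t' ht'
        rw [hTy] at ht ht'
        obtain ⟨htT, ht1, ht2⟩ := Finset.mem_filter.mp ht
        obtain ⟨ht'T, ht'1, ht'2⟩ := Finset.mem_filter.mp ht'
        by_contra hne
        rcases lt_or_gt_of_ne hne with hlt | hlt
        · have := compLefts_sep h htT ht'T hlt
          linarith
        · have := compLefts_sep h ht'T htT hlt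
          linarith
      calc Mt.card ≤ (S ∪ Ta ∪ Tb).card := Finset.card_le_card hsub
        _ ≤ (S ∪ Ta).card + Tb.card := Finset.card_union_le _ _
        _ ≤ S.card + Ta.card + Tb.card := by
            have := Finset.card_union_le S Ta
            omega
        _ ≤ S.card + 2 := by
            have h1 := hcard1 a Ta hTa
            have h2 := hcard1 b Tb hTb
            omega
    -- Step 3 : μ (Ioo a b) at least the sum over S
    have hmu1 : (S.card : ℝ≥0∞) * ENNReal.ofReal (a₀ * cdelta n c k) ≤ μ (Set.Ioo a b) := by
      have hdisj : (S : Set ℝ).PairwiseDisjoint (fun t => Set.Icc t (t + cdelta n c k)) := by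
        intro t ht t' ht' hne
        exact compLefts_disjoint h (hSsub t (by exact_mod_cast ht))
          (hSsub t' (by exact_mod_cast ht')) hne
      have hmeas : ∀ t ∈ S, MeasurableSet (Set.Icc t (t + cdelta n c k)) :=
        fun t _ => measurableSet_Icc
      have hunion : (⋃ t ∈ (S : Set ℝ), Set.Icc t (t + cdelta n c k)) ⊆ Set.Ioo a b := by
        intro x hx
        obtain ⟨t, ht, hxt⟩ := Set.mem_iUnion₂.mp hx
        have htS : t ∈ S := by exact_mod_cast ht
        obtain ⟨_, ht1, ht2⟩ := Finset.mem_filter.mp htS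
        exact ⟨lt_of_lt_of_le ht1 hxt.1, lt_of_le_of_lt hxt.2 ht2⟩
      have heq := measure_biUnion_finset (μ := μ) hdisj hmeas
      have hge : ∀ t ∈ S, ENNReal.ofReal (a₀ * cdelta n c k) ≤ μ (Set.Icc t (t + cdelta n c k)) :=
        fun t ht => mu_comp_ge h hp hμ hk₀ huni hk (hSsub t ht)
      calc (S.card : ℝ≥0∞) * ENNReal.ofReal (a₀ * cdelta n c k)
          = ∑ _t ∈ S, ENNReal.ofReal (a₀ * cdelta n c k) := by
            rw [Finset.sum_const, nsmul_eq_mul]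
        _ ≤ ∑ t ∈ S, μ (Set.Icc t (t + cdelta n c k)) := Finset.sum_le_sum hge
        _ = μ (⋃ t ∈ (S : Set ℝ), Set.Icc t (t + cdelta n c k)) := heq.symm
        _ ≤ μ (Set.Ioo a b) := measure_mono hunion
    -- Step 4 : combine
    have hmle : m ≤ ((S.card : ℝ) + 2) * cdelta n c k := by
      have h2 : m ≤ ((Mt.card : ℝ) * cdelta n c k) := by
        rw [hm]
        exact ENNReal.toReal_le_of_le_ofReal (by positivity) hvol1
      have h3 : (Mt.card : ℝ) ≤ (S.card : ℝ) + 2 := by exact_mod_cast hcard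
      nlinarith [hδpos.le]
    calc ENNReal.ofReal (a₀ * (m - 2 * cdelta n c k))
        ≤ ENNReal.ofReal ((S.card : ℝ) * (a₀ * cdelta n c k)) := by
          apply ENNReal.ofReal_le_ofReal
          nlinarith [ha₀pos, hδpos, hmle]
      _ = (S.card : ℝ≥0∞) * ENNReal.ofReal (a₀ * cdelta n c k) := by
          rw [← ENNReal.ofReal_natCast S.card, ← ENNReal.ofReal_mul (by positivity)]
      _ ≤ μ (Set.Ioo a b) := hmu1
  -- limit as k → ∞
  have hlim : Tendsto (fun k => ENNReal.ofReal (a₀ * (m - 2 * cdelta n c k))) atTop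
      (nhds (ENNReal.ofReal (a₀ * m))) := by
    have h1 : Tendsto (fun k => a₀ * (m - 2 * cdelta n c k)) atTop (nhds (a₀ * m)) := by
      have h2 := (cdelta_tendsto h).const_mul 2
      rw [mul_zero] at h2
      have h3 : Tendsto (fun k => m - 2 * cdelta n c k) atTop (nhds (m - 0)) :=
        tendsto_const_nhds.sub h2
      rw [sub_zero] at h3
      exact h3.const_mul a₀
    exact (ENNReal.continuous_ofReal.continuousAt.tendsto).comp h1
  have hfin : ENNReal.ofReal (a₀ * m) ≤ μ (Set.Ioo a b) := by
    apply le_of_tendsto hlim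
    filter_upwards [eventually_ge_atTop (k₀ - 1)] with k hk
    exact key k hk
  rw [ENNReal.ofReal_mul ha₀pos.le] at hfin
  rwa [hm, ENNReal.ofReal_toReal hvolfin] at hfin

end KeyEstimates


theorem stmt10 (n : ℕ → ℕ) (c : ℕ → ℝ) (p : ℕ → ℕ → ℝ) (μ : Measure ℝ)
    (h : CantorParams n c) (hp : MatchingSeq n p)
    (hsum : Summable (fun k => (n k : ℝ) * c k))
    (huni : ∃ k₀, 1 ≤ k₀ ∧ ∀ k, k₀ ≤ k → ∀ i, 1 ≤ i → i ≤ n k → p k i = 1 / (n k : ℝ))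
    (hμ : MatchingMeasure n c p μ) :
    ∃ ν : Measure ℝ, ν (Set.Icc (0 : ℝ) 1)ᶜ = 0 ∧
      (∃ D : ℝ≥0∞, 1 ≤ D ∧ D < ⊤ ∧ DoublingOn ν (Set.Icc 0 1) D) ∧
      ν.restrict (uniformCantorSet n c) = μ := by
  classical
  obtain ⟨k₀, hk₀1, huni'⟩ := huni
  obtain ⟨θ, hθ0, hθ⟩ := theta_exists h hsum
  set E : Set ℝ := uniformCantorSet n c with hE
  have hEmeas : MeasurableSet E := measurable_E
  set B : ℝ := (∏ j ∈ Finset.Icc 1 (k₀-1), (n j : ℝ)) / θ with hBdef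
  have hBpos : 0 < B := by
    apply div_pos _ hθ0
    apply Finset.prod_pos
    intro j hj
    have := (h j (Finset.mem_Icc.mp hj).1).1
    positivity
  set a₀ : ℝ := ∏ j ∈ Finset.Icc 1 (k₀-1), pminf n p j with ha₀def
  have ha₀pos : 0 < a₀ :=
    Finset.prod_pos (fun j hj => pminf_pos h hp j (Finset.mem_Icc.mp hj).1)
  set m₁ : ℝ := min a₀ 1 with hm₁def
  have hm₁pos : 0 < m₁ := lt_min ha₀pos one_pos
  have hm₁le : m₁ ≤ 1 := min_le_right _ _
  set ν : Measure ℝ := μ + volume.restrict (Set.Icc 0 1 \ E) with hν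
  -- lower estimate for ν on balls
  have hlow : ∀ x ∈ Set.Icc (0:ℝ) 1, ∀ s : ℝ, 0 < s →
      ENNReal.ofReal (m₁ * (min (x+s) 1 - max (x-s) 0))
        ≤ ν (Metric.ball x s ∩ Set.Icc 0 1) := by
    intro x hx s hs
    set A : ℝ := max (x-s) 0 with hA
    set Bs : ℝ := min (x+s) 1 with hBs
    have hball : Metric.ball x s = Set.Ioo (x-s) (x+s) := Real.ball_eq_Ioo x s
    have hIoo_sub : Set.Ioo A Bs ⊆ Metric.ball x s ∩ Set.Icc 0 1 := by
      rintro y ⟨hy1, hy2⟩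
      rw [hball]
      constructor
      · exact ⟨lt_of_le_of_lt (le_max_left _ _) hy1, lt_of_lt_of_le hy2 (min_le_left _ _)⟩
      · exact ⟨le_of_lt (lt_of_le_of_lt (le_max_right _ _) hy1),
          le_of_lt (lt_of_lt_of_le hy2 (min_le_right _ _))⟩
    have hmeas_bi : MeasurableSet (Metric.ball x s ∩ Set.Icc (0:ℝ) 1) :=
      Metric.isOpen_ball.measurableSet.inter measurableSet_Icc
    have happ : ν (Metric.ball x s ∩ Set.Icc 0 1)
        = μ (Metric.ball x s ∩ Set.Icc 0 1)
          + volume ((Metric.ball x s ∩ Set.Icc 0 1) ∩ (Set.Icc 0 1 \ E)) := by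
      rw [hν, Measure.add_apply, Measure.restrict_apply hmeas_bi]
    rw [happ]
    have h1 : μ (Set.Ioo A Bs) ≤ μ (Metric.ball x s ∩ Set.Icc 0 1) :=
      measure_mono hIoo_sub
    have h2 : volume (Set.Ioo A Bs \ E)
        ≤ volume ((Metric.ball x s ∩ Set.Icc 0 1) ∩ (Set.Icc 0 1 \ E)) := by
      apply measure_mono
      rintro y ⟨hy1, hy2⟩
      refine ⟨hIoo_sub hy1, ⟨(hIoo_sub hy1).2, hy2⟩⟩
    have h3 := mu_Ioo_ge h hp hμ hk₀1 huni' A Bs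
    have h4 : ENNReal.ofReal m₁ * volume (Set.Ioo A Bs ∩ E) ≤ μ (Set.Ioo A Bs) := by
      refine le_trans (mul_le_mul_left (ENNReal.ofReal_le_ofReal (min_le_left a₀ 1)) _) h3
    have h5 : ENNReal.ofReal m₁ * volume (Set.Ioo A Bs \ E) ≤ volume (Set.Ioo A Bs \ E) := by
      apply mul_le_of_le_one_left zero_le
      exact ENNReal.ofReal_le_one.mpr hm₁le
    have h6 : ENNReal.ofReal m₁ * volume (Set.Ioo A Bs)
        ≤ μ (Set.Ioo A Bs) + volume (Set.Ioo A Bs \ E) := by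
      rw [← measure_inter_add_diff (Set.Ioo A Bs) hEmeas, mul_add]
      exact add_le_add h4 h5
    have h7 : ENNReal.ofReal (m₁ * (Bs - A)) ≤ μ (Set.Ioo A Bs) + volume (Set.Ioo A Bs \ E) := by
      rw [ENNReal.ofReal_mul hm₁pos.le, ← Real.volume_Ioo (a := A) (b := Bs)]
      exact h6
    exact le_trans h7 (add_le_add h1 h2)
  -- upper estimate for ν on balls
  have hup : ∀ x ∈ Set.Icc (0:ℝ) 1, ∀ s : ℝ, 0 < s →
      ν (Metric.ball x s ∩ Set.Icc 0 1)
        ≤ ENNReal.ofReal ((B+1) * (min (x+s) 1 - max (x-s) 0)) := by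
    intro x hx s hs
    set A : ℝ := max (x-s) 0 with hA
    set Bs : ℝ := min (x+s) 1 with hBs
    have hABs : A ≤ Bs := by
      apply le_of_lt
      apply max_lt (lt_min (by linarith) (by linarith [hx.2])) (lt_min (by linarith [hx.1]) one_pos)
    have hball : Metric.ball x s = Set.Ioo (x-s) (x+s) := Real.ball_eq_Ioo x s
    have hsub_Icc : Metric.ball x s ∩ Set.Icc 0 1 ⊆ Set.Icc A Bs := by
      rintro y ⟨hy1, hy2⟩
      rw [hball] at hy1
      exact ⟨max_le hy1.1.le hy2.1, le_min hy1.2.le hy2.2⟩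
    have hmeas_bi : MeasurableSet (Metric.ball x s ∩ Set.Icc (0:ℝ) 1) :=
      Metric.isOpen_ball.measurableSet.inter measurableSet_Icc
    have happ : ν (Metric.ball x s ∩ Set.Icc 0 1)
        = μ (Metric.ball x s ∩ Set.Icc 0 1)
          + volume ((Metric.ball x s ∩ Set.Icc 0 1) ∩ (Set.Icc 0 1 \ E)) := by
      rw [hν, Measure.add_apply, Measure.restrict_apply hmeas_bi]
    rw [happ]
    have h1 : μ (Metric.ball x s ∩ Set.Icc 0 1) ≤ ENNReal.ofReal (B * (Bs - A)) :=
      le_trans (measure_mono hsub_Icc) (mu_Icc_le h hp hμ hk₀1 huni' hθ0 hθ A Bs hABs)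
    have h2 : volume ((Metric.ball x s ∩ Set.Icc 0 1) ∩ (Set.Icc 0 1 \ E))
        ≤ ENNReal.ofReal (Bs - A) := by
      calc volume ((Metric.ball x s ∩ Set.Icc 0 1) ∩ (Set.Icc 0 1 \ E))
          ≤ volume (Set.Icc A Bs) := measure_mono (le_trans Set.inter_subset_left hsub_Icc)
        _ = ENNReal.ofReal (Bs - A) := Real.volume_Icc
    calc μ (Metric.ball x s ∩ Set.Icc 0 1)
          + volume ((Metric.ball x s ∩ Set.Icc 0 1) ∩ (Set.Icc 0 1 \ E))
        ≤ ENNReal.ofReal (B * (Bs - A)) + ENNReal.ofReal (Bs - A) := add_le_add h1 h2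
      _ = ENNReal.ofReal ((B+1) * (Bs - A)) := by
          rw [← ENNReal.ofReal_add (mul_nonneg hBpos.le (by linarith)) (by linarith)]
          congr 1
          ring
  refine ⟨ν, ?_, ⟨ENNReal.ofReal (8*(B+1)/m₁), ?_, ENNReal.ofReal_lt_top, ?_⟩, ?_⟩
  · -- vanishing outside [0,1]
    rw [hν, Measure.add_apply, Measure.restrict_apply measurableSet_Icc.compl]
    have he : (Set.Icc (0:ℝ) 1)ᶜ ∩ (Set.Icc 0 1 \ E) = ∅ := by
      ext y; simp only [Set.mem_inter_iff, Set.mem_compl_iff, Set.mem_diff, Set.mem_empty_iff_false]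
      tauto
    rw [mu_compl_Icc hμ, he, measure_empty, add_zero]
  · -- D ≥ 1
    rw [ENNReal.one_le_ofReal]
    rw [le_div_iff₀ hm₁pos]
    nlinarith
  · -- doubling
    intro x hx r hr
    have hlam2pos : 0 < min (x+2*r) 1 - max (x-2*r) 0 := by
      have := hx.1; have := hx.2
      apply sub_pos.mpr
      apply max_lt (lt_min (by linarith) (by linarith)) (lt_min (by linarith) one_pos)
    have hlam1ge : min r 1 / 2 ≤ min (x+r) 1 - max (x-r) 0 := by
      have hx0 := hx.1; have hx1 := hx.2
      have hmin : min r 1 / 2 ≤ min r (1/2) := by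
        rcases le_total r 1 with hr1 | hr1
        · rw [min_eq_left hr1]
          exact le_min (by linarith) (by linarith)
        · rw [min_eq_right hr1]
          exact le_min (by linarith) (by linarith)
      have hm1 : min r (1/2) ≤ r := min_le_left _ _
      have hm2 : min r (1/2) ≤ 1/2 := min_le_right _ _
      rcases le_total x (1/2) with hhalf | hhalf
      · have hA : max (x-r) 0 ≤ x := max_le (by linarith) hx0
        have hB : x + min r (1/2) ≤ min (x+r) 1 := le_min (by linarith) (by linarith)
        linarith
      · have hA : max (x-r) 0 ≤ x - min r (1/2) := max_le (by linarith) (by linarith)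
        have hB : x ≤ min (x+r) 1 := le_min (by linarith) (by linarith)
        linarith
    have hlam2le : min (x+2*r) 1 - max (x-2*r) 0 ≤ 4 * min r 1 := by
      have h1 : min (x+2*r) 1 - max (x-2*r) 0 ≤ 4*r := by
        have := min_le_left (x+2*r) 1
        have := le_max_left (x-2*r) 0
        linarith
      have h2 : min (x+2*r) 1 - max (x-2*r) 0 ≤ 1 := by
        have := min_le_right (x+2*r) 1
        have := le_max_right (x-2*r) 0
        linarith
      rcases le_total r 1 with hr1 | hr1
      · rw [min_eq_left hr1]; linarith
      · rw [min_eq_right hr1]; linarith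
    have hlow2 := hlow x hx (2*r) (by linarith)
    have hlow1 := hlow x hx r hr
    have hup2 := hup x hx (2*r) (by linarith)
    refine ⟨?_, ?_, lt_of_le_of_lt hup2 ENNReal.ofReal_lt_top⟩
    · apply lt_of_lt_of_le _ hlow2
      apply ENNReal.ofReal_pos.mpr
      positivity
    · have hchain : (B+1) * (min (x+2*r) 1 - max (x-2*r) 0)
          ≤ 8*(B+1)/m₁ * (m₁ * (min (x+r) 1 - max (x-r) 0)) := by
        have he : 8*(B+1)/m₁ * (m₁ * (min (x+r) 1 - max (x-r) 0))
            = 8*(B+1) * (min (x+r) 1 - max (x-r) 0) := by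
          field_simp
        rw [he]
        nlinarith [hlam2le, hlam1ge, hBpos]
      calc ν (Metric.ball x (2*r) ∩ Set.Icc 0 1)
          ≤ ENNReal.ofReal ((B+1) * (min (x+2*r) 1 - max (x-2*r) 0)) := hup2
        _ ≤ ENNReal.ofReal (8*(B+1)/m₁ * (m₁ * (min (x+r) 1 - max (x-r) 0))) :=
            ENNReal.ofReal_le_ofReal hchain
        _ = ENNReal.ofReal (8*(B+1)/m₁) * ENNReal.ofReal (m₁ * (min (x+r) 1 - max (x-r) 0)) :=
            ENNReal.ofReal_mul (by positivity)
        _ ≤ ENNReal.ofReal (8*(B+1)/m₁) * ν (Metric.ball x r ∩ Set.Icc 0 1) :=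
            mul_le_mul_right hlow1 _
  · -- restriction to E is μ
    rw [hν, Measure.restrict_add]
    have h1 : μ.restrict E = μ := by
      apply Measure.restrict_eq_self_of_ae_mem
      rw [Filter.eventually_iff]
      have : {x | x ∈ E} = E := rfl
      rw [mem_ae_iff]
      simpa using hμ.2.1
    have h2 : (volume.restrict (Set.Icc 0 1 \ E)).restrict E = 0 := by
      rw [Measure.restrict_restrict hEmeas]
      have : E ∩ (Set.Icc 0 1 \ E) = ∅ := by
        ext y; simp only [Set.mem_inter_iff, Set.mem_diff, Set.mem_empty_iff_false]
        tauto
      rw [this, Measure.restrict_empty]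
    rw [h1, h2, add_zero]
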